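/- arXiv:1407.3364 — 12 statements merged into one kernel-verified Lean document; each statement's English description precedes it below -/
import Mathlib

section
/- The map H of the plane defined by H(x,y) = (|x| - y, x) is periodic with period 9; that is, H^9 is the identity map and H^k is not the identity for 1 ≤ k < 9. -/
set_option maxHeartbeats 4000000 in
theorem brown_map_period_nine
    (H : ℝ × ℝ → ℝ × ℝ)
    (hH : ∀ x y : ℝ, H (x, y) = (|x| - y, x)) :
    H^[9] = id ∧ ∀ k, 1 ≤ k → k < 9 → H^[k] ≠ id := by
  constructor
  · funext p
    obtain ⟨x, y⟩ := p
    show H^[9] (x, y) = (x, y)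
    simp only [Function.iterate_succ, Function.iterate_zero, Function.comp_apply, id_eq, hH]
    clear hH
    set x1 := |x| - y with hx1
    set x2 := |x1| - x with hx2
    set x3 := |x2| - x1 with hx3
    set x4 := |x3| - x2 with hx4
    set x5 := |x4| - x3 with hx5
    set x6 := |x5| - x4 with hx6
    set x7 := |x6| - x5 with hx7
    set x8 := |x7| - x6 with hx8
    simp only [Prod.mk.injEq]
    rcases abs_cases x with ⟨h1,h1'⟩|⟨h1,h1'⟩ <;>
    rcases abs_cases x1 with ⟨h2,h2'⟩|⟨h2,h2'⟩ <;>
    rcases abs_cases x2 with ⟨h3,h3'⟩|⟨h3,h3'⟩ <;>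
    rcases abs_cases x3 with ⟨h4,h4'⟩|⟨h4,h4'⟩ <;>
      (try (exfalso; linarith)) <;>
    rcases abs_cases x4 with ⟨h5,h5'⟩|⟨h5,h5'⟩ <;>
      (try (exfalso; linarith)) <;>
    rcases abs_cases x5 with ⟨h6,h6'⟩|⟨h6,h6'⟩ <;>
      (try (exfalso; linarith)) <;>
    rcases abs_cases x6 with ⟨h7,h7'⟩|⟨h7,h7'⟩ <;>
      (try (exfalso; linarith)) <;>
    rcases abs_cases x7 with ⟨h8,h8'⟩|⟨h8,h8'⟩ <;>
      (try (exfalso; linarith)) <;>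
    rcases abs_cases x8 with ⟨h9,h9'⟩|⟨h9,h9'⟩ <;>
    constructor <;> linarith
  · intro k hk1 hk2 h
    have := congrFun h ((1:ℝ), (0:ℝ))
    interval_cases k <;>
      norm_num [Function.iterate_succ, Function.iterate_zero, Function.comp_apply, hH,
        Prod.ext_iff, abs_of_nonneg, abs_of_nonpos] at this
end

section
/- The recurrence h_{n+1} = |h_n| - h_{n-1} is periodic with period 9: for any real initial values h_0, h_1, the sequence satisfies h_{n+9} = h_n for all n. -/
set_option maxHeartbeats 4000000 in
lemma nine_step (x0 x1 x2 x3 x4 x5 x6 x7 x8 x9 : ℝ)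
    (h2 : x2 = |x1| - x0) (h3 : x3 = |x2| - x1) (h4 : x4 = |x3| - x2)
    (h5 : x5 = |x4| - x3) (h6 : x6 = |x5| - x4) (h7 : x7 = |x6| - x5)
    (h8 : x8 = |x7| - x6) (h9 : x9 = |x8| - x7) : x9 = x0 := by
  rcases abs_cases x1 with ⟨e1, s1⟩ | ⟨e1, s1⟩ <;>
  rcases abs_cases x2 with ⟨e2, s2⟩ | ⟨e2, s2⟩ <;>
  rcases abs_cases x3 with ⟨e3, s3⟩ | ⟨e3, s3⟩ <;>
  rcases abs_cases x4 with ⟨e4, s4⟩ | ⟨e4, s4⟩ <;>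
  rcases abs_cases x5 with ⟨e5, s5⟩ | ⟨e5, s5⟩ <;>
  rcases abs_cases x6 with ⟨e6, s6⟩ | ⟨e6, s6⟩ <;>
  rcases abs_cases x7 with ⟨e7, s7⟩ | ⟨e7, s7⟩ <;>
  rcases abs_cases x8 with ⟨e8, s8⟩ | ⟨e8, s8⟩ <;>
  linarith

theorem brown_recurrence_period_nine
    (h : ℕ → ℝ)
    (hrec : ∀ n, 1 ≤ n → h (n + 1) = |h n| - h (n - 1)) :
    ∀ n, h (n + 9) = h n := by
  intro n
  have H : ∀ k, 1 ≤ k → h (k + 1) = |h k| - h (k - 1) := hrec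
  have e2 := H (n + 1) (by omega)
  have e3 := H (n + 2) (by omega)
  have e4 := H (n + 3) (by omega)
  have e5 := H (n + 4) (by omega)
  have e6 := H (n + 5) (by omega)
  have e7 := H (n + 6) (by omega)
  have e8 := H (n + 7) (by omega)
  have e9 := H (n + 8) (by omega)
  simp only [Nat.add_sub_cancel] at *
  have : n + 1 + 1 = n + 2 := rfl
  exact nine_step (h n) (h (n+1)) (h (n+2)) (h (n+3)) (h (n+4)) (h (n+5))
    (h (n+6)) (h (n+7)) (h (n+8)) (h (n+9))
    (by convert e2 using 3 <;> omega) (by convert e3 using 3 <;> omega)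
    (by convert e4 using 3 <;> omega) (by convert e5 using 3 <;> omega)
    (by convert e6 using 3 <;> omega) (by convert e7 using 3 <;> omega)
    (by convert e8 using 3 <;> omega) (by convert e9 using 3 <;> omega)
end

section
/- The map G of the plane defined by G(x,y) = ((|x| + x)/2 - y, x) is periodic with period 5. -/
theorem G_map_period_five
    (G : ℝ × ℝ → ℝ × ℝ)
    (hG : ∀ x y : ℝ, G (x, y) = ((|x| + x) / 2 - y, x)) :
    G^[5] = id ∧ ∀ k, 1 ≤ k → k < 5 → G^[k] ≠ id := by
  have habs : ∀ a : ℝ, (|a| + a) / 2 = max a 0 := by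
    intro a
    rcases abs_cases a with ⟨h, h'⟩ | ⟨h, h'⟩
    · rw [h, max_eq_left h']; ring
    · rw [h, max_eq_right h'.le]; ring
  have hG' : ∀ x y : ℝ, G (x, y) = (max x 0 - y, x) := by
    intro x y; rw [hG, habs]
  constructor
  · funext p
    obtain ⟨x, y⟩ := p
    show G (G (G (G (G (x, y))))) = id (x, y)
    rw [hG', hG', hG', hG', hG']
    simp only [max_def, id_eq, Prod.mk.injEq]
    split_ifs <;> constructor <;> linarith
  · intro k hk1 hk5 h
    have h11 : G (1, 1) = (0, 1) := by rw [hG]; norm_num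
    have h01 : G (0, 1) = (-1, 0) := by rw [hG]; norm_num
    have hm10 : G (-1, 0) = (0, -1) := by rw [hG]; norm_num
    have h0m1 : G (0, -1) = (1, 0) := by rw [hG]; norm_num
    interval_cases k
    · have := congrFun h (1, 1)
      simp only [Function.iterate_one, id_eq, h11] at this
      simp at this
    · have := congrFun h (1, 1)
      simp only [show (2:ℕ) = 1 + 1 from rfl, Function.iterate_add_apply,
        Function.iterate_one, id_eq, h11, h01] at this
      simpa using this
    · have := congrFun h (1, 1)
      simp only [show (3:ℕ) = 1 + 1 + 1 from rfl, Function.iterate_add_apply,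
        Function.iterate_one, id_eq, h11, h01, hm10] at this
      simpa using this
    · have := congrFun h (1, 1)
      simp only [show (4:ℕ) = 1 + 1 + 1 + 1 from rfl, Function.iterate_add_apply,
        Function.iterate_one, id_eq, h11, h01, hm10, h0m1] at this
      simpa using this
end

section
/- The recurrence g_{n+1} = (|g_n| + g_n)/2 - g_{n-1} is periodic with period 5: for any real initial values, g_{n+5} = g_n for all n. -/
lemma key_step (x0 x1 x2 x3 x4 x5 : ℝ)
    (h2 : x2 = (|x1| + x1) / 2 - x0)
    (h3 : x3 = (|x2| + x2) / 2 - x1)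
    (h4 : x4 = (|x3| + x3) / 2 - x2)
    (h5 : x5 = (|x4| + x4) / 2 - x3) : x5 = x0 := by
  rcases abs_cases x1 with ⟨e1, l1⟩ | ⟨e1, l1⟩ <;>
  rcases abs_cases x2 with ⟨e2, l2⟩ | ⟨e2, l2⟩ <;>
  rcases abs_cases x3 with ⟨e3, l3⟩ | ⟨e3, l3⟩ <;>
  rcases abs_cases x4 with ⟨e4, l4⟩ | ⟨e4, l4⟩ <;>
  rw [e1] at h2 <;> rw [e2] at h3 <;> rw [e3] at h4 <;> rw [e4] at h5 <;>
  linarith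

theorem G_recurrence_period_five
    (g : ℕ → ℝ)
    (hrec : ∀ n, 1 ≤ n → g (n + 1) = (|g n| + g n) / 2 - g (n - 1)) :
    ∀ n, g (n + 5) = g n := by
  intro n
  have h2 := hrec (n + 1) (by omega)
  have h3 := hrec (n + 2) (by omega)
  have h4 := hrec (n + 3) (by omega)
  have h5 := hrec (n + 4) (by omega)
  simp only [Nat.add_sub_cancel] at h2 h3 h4 h5
  exact key_step (g n) (g (n+1)) (g (n+2)) (g (n+3)) (g (n+4)) (g (n+5)) h2 h3 h4 h5
end

section
/- The map F of the plane defined by F(x,y) = ((|x| - x)/2 - y, x) is periodic with period 7. -/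
theorem F_map_period_seven
    (F : ℝ × ℝ → ℝ × ℝ)
    (hF : ∀ x y : ℝ, F (x, y) = ((|x| - x) / 2 - y, x)) :
    F^[7] = id ∧ ∀ k, 1 ≤ k → k < 7 → F^[k] ≠ id := by
  have H1 : ∀ a b c : ℝ, 0 ≤ a → c = -b → F (a, b) = (c, a) := by
    intro a b c ha hc
    rw [hF, abs_of_nonneg ha, hc, Prod.ext_iff]
    constructor <;> [ring; rfl]
  have H2 : ∀ a b c : ℝ, a ≤ 0 → c = -a - b → F (a, b) = (c, a) := by
    intro a b c ha hc
    rw [hF, abs_of_nonpos ha, hc, Prod.ext_iff]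
    constructor <;> [ring; rfl]
  constructor
  · funext p
    obtain ⟨x, y⟩ := p
    show F (F (F (F (F (F (F (x, y))))))) = (x, y)
    rcases le_total 0 x with hx | hx
    · rcases le_total 0 y with hy | hy
      · rw [H1 x y (-y) hx (by ring), H2 (-y) x (y - x) (by linarith) (by ring)]
        rcases le_total x y with hxy | hxy
        · rw [H1 (y - x) (-y) y (by linarith) (by ring),
            H1 y (y - x) (x - y) hy (by ring),
            H2 (x - y) y (-x) (by linarith) (by ring),
            H2 (-x) (x - y) y (by linarith) (by ring),
            H1 y (-x) x hy (by ring)]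
        · rw [H2 (y - x) (-y) x (by linarith) (by ring),
            H1 x (y - x) (x - y) hx (by ring),
            H1 (x - y) x (-x) (by linarith) (by ring),
            H2 (-x) (x - y) y (by linarith) (by ring),
            H1 y (-x) x hy (by ring)]
      · rw [H1 x y (-y) hx (by ring), H1 (-y) x (-x) (by linarith) (by ring),
          H2 (-x) (-y) (x + y) (by linarith) (by ring)]
        rcases le_total 0 (x + y) with hxy | hxy
        · rw [H1 (x + y) (-x) x hxy (by ring),
            H1 x (x + y) (-x - y) hx (by ring),
            H2 (-x - y) x y (by linarith) (by ring),
            H2 y (-x - y) x hy (by ring)]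
        · rw [H2 (x + y) (-x) (-y) hxy (by ring),
            H1 (-y) (x + y) (-x - y) (by linarith) (by ring),
            H1 (-x - y) (-y) y (by linarith) (by ring),
            H2 y (-x - y) x hy (by ring)]
    · rw [H2 x y (-x - y) hx (by ring)]
      rcases le_total 0 (x + y) with hxy | hxy
      · rw [H2 (-x - y) x y (by linarith) (by ring),
          H1 y (-x - y) (x + y) (by linarith) (by ring),
          H1 (x + y) y (-y) hxy (by ring),
          H2 (-y) (x + y) (-x) (by linarith) (by ring),
          H1 (-x) (-y) y (by linarith) (by ring),
          H1 y (-x) x (by linarith) (by ring)]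
      · rw [H1 (-x - y) x (-x) (by linarith) (by ring),
          H1 (-x) (-x - y) (x + y) (by linarith) (by ring),
          H2 (x + y) (-x) (-y) hxy (by ring)]
        rcases le_total 0 y with hy | hy
        · rw [H2 (-y) (x + y) (-x) (by linarith) (by ring),
            H1 (-x) (-y) y (by linarith) (by ring),
            H1 y (-x) x hy (by ring)]
        · rw [H1 (-y) (x + y) (-x - y) (by linarith) (by ring),
            H1 (-x - y) (-y) y (by linarith) (by ring),
            H2 y (-x - y) x hy (by ring)]
  · intro k hk1 hk7 h
    have e1 : F (1, 0) = (0, 1) := H1 1 0 0 (by norm_num) (by norm_num)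
    have e2 : F (0, 1) = (-1, 0) := H1 0 1 (-1) le_rfl (by norm_num)
    have e3 : F (-1, 0) = (1, -1) := H2 (-1) 0 1 (by norm_num) (by norm_num)
    have e4 : F (1, -1) = (1, 1) := H1 1 (-1) 1 (by norm_num) (by norm_num)
    have e5 : F (1, 1) = (-1, 1) := H1 1 1 (-1) (by norm_num) (by norm_num)
    have e6 : F (-1, 1) = (0, -1) := H2 (-1) 1 0 (by norm_num) (by norm_num)
    have hp := congrFun h ((1 : ℝ), (0 : ℝ))
    interval_cases k <;>
      simp only [Function.iterate_succ, Function.iterate_zero, Function.comp_apply,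
        id_eq, e1, e2, e3, e4, e5, e6, Prod.mk.injEq] at hp <;>
      norm_num at hp
end

section
/- The recurrence f_{n+1} = (|f_n| - f_n)/2 - f_{n-1} is periodic with period 7: for any real initial values, f_{n+7} = f_n for all n. -/
set_option maxHeartbeats 4000000 in
lemma key_seven (x0 x1 x2 x3 x4 x5 x6 x7 x8 : ℝ)
    (h2 : x2 = (|x1| - x1) / 2 - x0)
    (h3 : x3 = (|x2| - x2) / 2 - x1)
    (h4 : x4 = (|x3| - x3) / 2 - x2)
    (h5 : x5 = (|x4| - x4) / 2 - x3)
    (h6 : x6 = (|x5| - x5) / 2 - x4)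
    (h7 : x7 = (|x6| - x6) / 2 - x5)
    (h8 : x8 = (|x7| - x7) / 2 - x6) :
    x7 = x0 ∧ x8 = x1 := by
  rcases abs_cases x1 with ⟨e1, s1⟩ | ⟨e1, s1⟩ <;> rw [e1] at h2 <;>
  rcases abs_cases x2 with ⟨e2, s2⟩ | ⟨e2, s2⟩ <;> rw [e2] at h3 <;>
  rcases abs_cases x3 with ⟨e3, s3⟩ | ⟨e3, s3⟩ <;> rw [e3] at h4 <;>
  rcases abs_cases x4 with ⟨e4, s4⟩ | ⟨e4, s4⟩ <;> rw [e4] at h5 <;>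
  rcases abs_cases x5 with ⟨e5, s5⟩ | ⟨e5, s5⟩ <;> rw [e5] at h6 <;>
  rcases abs_cases x6 with ⟨e6, s6⟩ | ⟨e6, s6⟩ <;> rw [e6] at h7 <;>
  rcases abs_cases x7 with ⟨e7, s7⟩ | ⟨e7, s7⟩ <;> rw [e7] at h8 <;>
  constructor <;> linarith

theorem F_recurrence_period_seven
    (f : ℕ → ℝ)
    (hrec : ∀ n, 1 ≤ n → f (n + 1) = (|f n| - f n) / 2 - f (n - 1)) :
    ∀ n, f (n + 7) = f n := by
  have main : ∀ n, 1 ≤ n → f (n + 7) = f n ∧ f (n + 8) = f (n + 1) := by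
    intro n hn
    have r2 := hrec (n + 1) (by omega)
    have r3 := hrec (n + 2) (by omega)
    have r4 := hrec (n + 3) (by omega)
    have r5 := hrec (n + 4) (by omega)
    have r6 := hrec (n + 5) (by omega)
    have r7 := hrec (n + 6) (by omega)
    have r8 := hrec (n + 7) (by omega)
    simp only [Nat.add_sub_cancel] at r2 r3 r4 r5 r6 r7 r8
    exact key_seven (f n) (f (n+1)) (f (n+2)) (f (n+3)) (f (n+4)) (f (n+5))
      (f (n+6)) (f (n+7)) (f (n+8)) r2 r3 r4 r5 r6 r7 r8
  intro n
  match n with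
  | 0 =>
    have h1 := (main 1 le_rfl).1
    have h2 := (main 1 le_rfl).2
    -- h1 : f 8 = f 1, h2 : f 9 = f 2
    have r1 := hrec 1 le_rfl
    have r8 := hrec 8 (by omega)
    norm_num at r1 r8 h1 h2 ⊢
    rw [h1] at r8
    rw [h2] at r8
    linarith
  | (m + 1) => exact (main (m + 1) (by omega)).1
end

section
/- (Crystallographic restriction) If A is a 2×2 matrix with integer entries and A^n = id for some natural number n ≥ 1, then the order of A is 1, 2, 3, 4 or 6. -/
open Matrix

private lemma ch2 (A : Matrix (Fin 2) (Fin 2) ℤ) :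
    A ^ 2 = A.trace • A - A.det • (1 : Matrix (Fin 2) (Fin 2) ℤ) := by
  ext i j
  fin_cases i <;> fin_cases j <;>
    simp only [pow_two, Matrix.mul_apply, Fin.sum_univ_two, Matrix.trace_fin_two,
      Matrix.det_fin_two, Matrix.one_apply, Matrix.sub_apply, Matrix.smul_apply,
      smul_eq_mul, Fin.isValue] <;> norm_num <;> ring

private def sq2 (t d : ℤ) : ℕ → ℤ × ℤ
  | 0 => (0, 1)
  | k+1 => (t * (sq2 t d k).1 + (sq2 t d k).2, -d * (sq2 t d k).1)

private lemma pow_rep (A : Matrix (Fin 2) (Fin 2) ℤ) (k : ℕ) :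
    A ^ k = (sq2 A.trace A.det k).1 • A +
      (sq2 A.trace A.det k).2 • (1 : Matrix (Fin 2) (Fin 2) ℤ) := by
  induction k with
  | zero => simp [sq2]
  | succ k ih =>
    have h2 : A * A = A.trace • A - A.det • (1 : Matrix (Fin 2) (Fin 2) ℤ) := by
      rw [← pow_two]; exact ch2 A
    rw [pow_succ, ih, sq2, add_mul, smul_mul_assoc, smul_mul_assoc, one_mul, h2]
    module

private lemma sq2_pos1 (t : ℤ) (ht : 3 ≤ t) :
    ∀ k, 1 ≤ k → 1 ≤ (sq2 t 1 k).1 ∧ 0 ≤ (sq2 t 1 k).1 + (sq2 t 1 k).2 := by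
  intro k
  induction k with
  | zero => omega
  | succ k ih =>
    intro _
    rcases Nat.lt_or_ge k 1 with h | h
    · interval_cases k
      simp [sq2]
    · obtain ⟨ha, hab⟩ := ih h
      simp only [sq2]
      constructor <;> nlinarith

private lemma sq2_pos2 (t : ℤ) (ht : 1 ≤ t) :
    ∀ k, 1 ≤ k → 1 ≤ (sq2 t (-1) k).1 ∧ 0 ≤ (sq2 t (-1) k).2 := by
  intro k
  induction k with
  | zero => omega
  | succ k ih =>
    intro _
    rcases Nat.lt_or_ge k 1 with h | h
    · interval_cases k
      simp [sq2]
    · obtain ⟨ha, hb⟩ := ih h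
      simp only [sq2]
      constructor <;> nlinarith

private lemma scalar_of (A : Matrix (Fin 2) (Fin 2) ℤ) (c e : ℤ) (hc : c ≠ 0)
    (h : c • A + e • (1 : Matrix (Fin 2) (Fin 2) ℤ) = 1) :
    A 0 1 = 0 ∧ A 1 0 = 0 ∧ A 0 0 = A 1 1 := by
  have h01 := congrFun (congrFun h 0) 1
  have h10 := congrFun (congrFun h 1) 0
  have h00 := congrFun (congrFun h 0) 0
  have h11 := congrFun (congrFun h 1) 1
  simp only [Matrix.one_apply, Matrix.add_apply, Matrix.smul_apply, smul_eq_mul,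
    Fin.isValue] at h01 h10 h00 h11
  norm_num at h01 h10 h00 h11
  refine ⟨?_, ?_, ?_⟩
  · rcases h01 with h | h
    · exact absurd h hc
    · exact h
  · rcases h10 with h | h
    · exact absurd h hc
    · exact h
  · have : c * A 0 0 = c * A 1 1 := by omega
    exact mul_left_cancel₀ hc this

private lemma no_big (A : Matrix (Fin 2) (Fin 2) ℤ) (n : ℕ) (hn : 1 ≤ n) (hA : A ^ n = 1)
    (h : (A.det = 1 ∧ 3 ≤ A.trace) ∨ (A.det = -1 ∧ 1 ≤ A.trace)) : False := by
  have hrep := pow_rep A n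
  rw [hA] at hrep
  have hc : 1 ≤ (sq2 A.trace A.det n).1 := by
    rcases h with ⟨hd, ht⟩ | ⟨hd, ht⟩
    · rw [hd]; exact (sq2_pos1 A.trace ht n hn).1
    · rw [hd]; exact (sq2_pos2 A.trace ht n hn).1
  obtain ⟨h01, h10, hdiag⟩ := scalar_of A _ _ (by omega) hrep.symm
  have hdet : A.det = A 0 0 * A 0 0 := by
    rw [Matrix.det_fin_two, h01, hdiag]; ring
  have htr : A.trace = 2 * A 0 0 := by
    rw [Matrix.trace_fin_two, hdiag]; ring
  rcases h with ⟨hd, ht⟩ | ⟨hd, ht⟩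
  · nlinarith [sq_nonneg (2 * A 0 0 - 3)]
  · nlinarith [sq_nonneg (A 0 0)]

private lemma unipotent_pow (N : Matrix (Fin 2) (Fin 2) ℤ) (hN : N * N = 0) (k : ℕ) :
    (1 + N) ^ k = 1 + (k : ℤ) • N := by
  induction k with
  | zero => simp
  | succ k ih =>
    rw [pow_succ, ih, add_mul, one_mul, mul_add, mul_one, smul_mul_assoc, hN,
      smul_zero, add_zero]
    push_cast
    rw [add_smul, one_smul]
    abel

private lemma eq_one_of_tr2 (A : Matrix (Fin 2) (Fin 2) ℤ) (n : ℕ) (hn : 1 ≤ n)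
    (hA : A ^ n = 1) (hd : A.det = 1) (ht : A.trace = 2) : A = 1 := by
  have h2 : A * A = (2 : ℤ) • A - (1 : ℤ) • (1 : Matrix (Fin 2) (Fin 2) ℤ) := by
    rw [← pow_two, ch2, ht, hd]
  have hN : (A - 1) * (A - 1) = 0 := by
    have : (A - 1) * (A - 1) = A * A - (2 : ℤ) • A + 1 := by
      rw [two_smul]; noncomm_ring
    rw [this, h2]; abel
  have hpow := unipotent_pow (A - 1) hN n
  rw [add_sub_cancel, hA] at hpow
  have h0 : (n : ℤ) • (A - 1) = 0 := by
    have := hpow.symm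
    rwa [add_eq_left] at this
  have hA1 : A - 1 = 0 := by
    rcases smul_eq_zero.1 h0 with h | h
    · exfalso; omega
    · exact h
  rwa [sub_eq_zero] at hA1
  
private lemma mem_of_dvd46 {m : ℕ} (h : m ∣ 4 ∨ m ∣ 6) (h0 : 0 < m) :
    m ∈ ({1, 2, 3, 4, 6} : Set ℕ) := by
  have h6 : m ≤ 6 := by
    rcases h with h | h
    · exact le_trans (Nat.le_of_dvd (by norm_num) h) (by norm_num)
    · exact Nat.le_of_dvd (by norm_num) h
  interval_cases m <;> (try simp) <;> omega

private lemma order_pos (A : Matrix (Fin 2) (Fin 2) ℤ) (n : ℕ) (hn : 1 ≤ n)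
    (hA : A ^ n = 1) : 0 < orderOf A := by
  have : IsOfFinOrder A := isOfFinOrder_iff_pow_eq_one.2 ⟨n, by omega, hA⟩
  exact this.orderOf_pos

theorem crystallographic_restriction
    (A : Matrix (Fin 2) (Fin 2) ℤ) (n : ℕ) (hn : 1 ≤ n) (hA : A ^ n = 1) :
    orderOf A ∈ ({1, 2, 3, 4, 6} : Set ℕ) := by
  have hn0 : n ≠ 0 := by omega
  have hpos := order_pos A n hn hA
  have hdet : A.det = 1 ∨ A.det = -1 := by
    have h1 : A.det ^ n = 1 := by rw [← Matrix.det_pow, hA, Matrix.det_one]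
    have hu := IsUnit.of_pow_eq_one h1 hn0
    exact Int.isUnit_iff.1 hu
  have hneg : (-A) ^ (2 * n) = 1 := by
    rw [pow_mul, neg_sq, ← pow_mul, mul_comm, pow_mul, hA, one_pow]
  have hdetneg : (-A).det = A.det := by
    rw [Matrix.det_neg]; simp
  have htrneg : (-A).trace = -A.trace := by
    simp [Matrix.trace_neg]
  have h2 := ch2 A
  rcases hdet with hd | hd
  · -- det = 1
    have hub : A.trace ≤ 2 := by
      by_contra h
      exact no_big A n hn hA (Or.inl ⟨hd, by omega⟩)
    have hlb : -2 ≤ A.trace := by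
      by_contra h
      refine no_big (-A) (2 * n) (by omega) hneg (Or.inl ⟨?_, ?_⟩)
      · rw [hdetneg]; exact hd
      · rw [htrneg]; omega
    have htcases : A.trace = -2 ∨ A.trace = -1 ∨ A.trace = 0 ∨ A.trace = 1 ∨
        A.trace = 2 := by omega
    rcases htcases with ht | ht | ht | ht | ht
    · -- A = -1
      have hA1 : -A = 1 := by
        refine eq_one_of_tr2 (-A) (2 * n) (by omega) hneg ?_ ?_
        · rw [hdetneg]; exact hd
        · rw [htrneg, ht]; ring
      have hA2 : A ^ 2 = 1 := by
        have : A = -1 := by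
          have := congrArg Neg.neg hA1
          simpa using this
        rw [this]; simp
      have hdvd : orderOf A ∣ 4 := orderOf_dvd_of_pow_eq_one
        (by rw [show (4:ℕ) = 2*2 from rfl, pow_mul, hA2, one_pow])
      exact mem_of_dvd46 (Or.inl hdvd) hpos
    · -- order divides 3
      have hmul : A * A = -A - 1 := by
        rw [← pow_two, h2, hd, ht]; module
      have h3 : A ^ 3 = 1 := by
        rw [show (3:ℕ) = 2+1 from rfl, pow_succ, pow_two, hmul, sub_mul, neg_mul,
          one_mul, hmul]
        abel
      have h6 : A ^ 6 = 1 := by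
        rw [show (6:ℕ) = 3*2 from rfl, pow_mul, h3, one_pow]
      exact mem_of_dvd46 (Or.inr (orderOf_dvd_of_pow_eq_one h6)) hpos
    · -- order divides 4
      have hA2 : A ^ 2 = -1 := by
        rw [h2, hd, ht]; module
      have h4 : A ^ 4 = 1 := by
        rw [show (4:ℕ) = 2*2 from rfl, pow_mul, hA2]; simp
      exact mem_of_dvd46 (Or.inl (orderOf_dvd_of_pow_eq_one h4)) hpos
    · -- order divides 6
      have hmul : A * A = A - 1 := by
        rw [← pow_two, h2, hd, ht]; module
      have h3 : A ^ 3 = -1 := by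
        rw [show (3:ℕ) = 2+1 from rfl, pow_succ, pow_two, hmul, sub_mul, one_mul,
          hmul]
        abel
      have h6 : A ^ 6 = 1 := by
        rw [show (6:ℕ) = 3*2 from rfl, pow_mul, h3]; simp
      exact mem_of_dvd46 (Or.inr (orderOf_dvd_of_pow_eq_one h6)) hpos
    · -- A = 1
      have hA1 : A = 1 := eq_one_of_tr2 A n hn hA hd ht
      rw [hA1]
      simp
  · -- det = -1, trace must be 0
    have hub : A.trace ≤ 0 := by
      by_contra h
      exact no_big A n hn hA (Or.inr ⟨hd, by omega⟩)
    have hlb : 0 ≤ A.trace := by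
      by_contra h
      refine no_big (-A) (2 * n) (by omega) hneg (Or.inr ⟨?_, ?_⟩)
      · rw [hdetneg]; exact hd
      · rw [htrneg]; omega
    have ht : A.trace = 0 := by omega
    have hA2 : A ^ 2 = 1 := by
      rw [h2, hd, ht]; module
    have h4 : A ^ 4 = 1 := by
      rw [show (4:ℕ) = 2*2 from rfl, pow_mul, hA2, one_pow]
    exact mem_of_dvd46 (Or.inl (orderOf_dvd_of_pow_eq_one h4)) hpos
end

section
/- Let f be the piecewise linear map given by A₁ = [[a,-1],[1,0]] on the half plane x ≥ 0 and A₂ = [[b,-1],[1,0]] on x < 0, with integers a, b ≤ -2. Then f is not periodic; in fact the orbit of (1,0) has strictly decreasing ratios: writing (x_{m+1}, x_m) = f^m(1,0), one has x_{m+1}/x_m < -1 for all m ≥ 1. -/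
private lemma sign_aux (a b : ℤ) (ha : a ≤ -2) (hb : b ≤ -2) (x : ℕ → ℝ)
    (h0 : x 0 = 0) (h1 : x 1 = 1)
    (hrecp : ∀ m : ℕ, 0 ≤ x (m+1) → x (m+2) = (a:ℝ) * x (m+1) - x m)
    (hrecn : ∀ m : ℕ, x (m+1) < 0 → x (m+2) = (b:ℝ) * x (m+1) - x m) :
    ∀ m : ℕ, 1 ≤ m →
      0 < (-1:ℝ)^(m+1) * x m ∧ (-1:ℝ)^(m+1) * x m < (-1:ℝ)^(m+2) * x (m+1) := by
  have haR : (a:ℝ) ≤ -2 := by exact_mod_cast ha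
  have hbR : (b:ℝ) ≤ -2 := by exact_mod_cast hb
  intro m hm
  induction m with
  | zero => omega
  | succ n ih =>
    rcases eq_or_lt_of_le hm with h | h
    · -- base case n+1 = 1
      have hn0 : n = 0 := by omega
      subst hn0
      have hx2 : x 2 = (a:ℝ) * x 1 - x 0 := hrecp 0 (by rw [h1]; norm_num)
      rw [h0, h1] at hx2
      constructor
      · norm_num [h1]
      · norm_num [h1, hx2]; linarith
    · have hn1 : 1 ≤ n := by omega
      obtain ⟨ihg, ihg'⟩ := ih hn1
      rcases Nat.even_or_odd n with he | ho
      · -- n even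
        have e1 : (-1:ℝ)^(n+1) = -1 := Odd.neg_one_pow (he.add_one)
        have e2 : (-1:ℝ)^(n+2) = 1 := Even.neg_one_pow (by
          rcases he with ⟨k, hk⟩; exact ⟨k+1, by omega⟩)
        have e3 : (-1:ℝ)^(n+3) = -1 := Odd.neg_one_pow (by
          refine Even.add_one ?_
          exact (Nat.even_add).mpr (by simp [he])) 
        rw [e1] at ihg ihg'
        rw [e2] at ihg'
        have hx1pos : 0 < x (n+1) := by linarith
        have hx2 : x (n+2) = (a:ℝ) * x (n+1) - x n := hrecp n (le_of_lt hx1pos)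
        constructor
        · rw [e2]; simpa using hx1pos
        · rw [e2, e3, hx2]
          nlinarith [mul_nonneg (by linarith : (0:ℝ) ≤ -(a:ℝ) - 2) (le_of_lt hx1pos)]
      · -- n odd
        have e1 : (-1:ℝ)^(n+1) = 1 := Even.neg_one_pow ho.add_one
        have e2 : (-1:ℝ)^(n+2) = -1 := Odd.neg_one_pow (by
          refine Even.add_one ?_; exact ho.add_one)
        have e3 : (-1:ℝ)^(n+3) = 1 := Even.neg_one_pow (by
          have : Odd (n+2) := by
            refine Even.add_one ?_; exact ho.add_one
          exact this.add_one)
        rw [e1] at ihg ihg'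
        rw [e2] at ihg'
        have hx1neg : x (n+1) < 0 := by linarith
        have hx2 : x (n+2) = (b:ℝ) * x (n+1) - x n := hrecn n hx1neg
        constructor
        · rw [e2]; linarith
        · rw [e2, e3, hx2]
          nlinarith [mul_nonneg (by linarith : (0:ℝ) ≤ -(b:ℝ) - 2) (le_of_lt (by linarith : (0:ℝ) < -x (n+1)))]

private lemma orbit_aux (a b : ℤ) (ha : a ≤ -2) (hb : b ≤ -2)
    (f : ℝ × ℝ → ℝ × ℝ)
    (hpos : ∀ x y : ℝ, 0 ≤ x → f (x, y) = ((a : ℝ) * x - y, x))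
    (hneg : ∀ x y : ℝ, x < 0 → f (x, y) = ((b : ℝ) * x - y, x))
    (x : ℕ → ℝ) (hx : ∀ m : ℕ, f^[m] (1, 0) = (x (m + 1), x m)) :
    ∀ m : ℕ, 1 ≤ m →
      0 < (-1:ℝ)^(m+1) * x m ∧ (-1:ℝ)^(m+1) * x m < (-1:ℝ)^(m+2) * x (m+1) := by
  have h0 : x 0 = 0 := by
    have := hx 0; simp at this; exact this.2.symm
  have h1 : x 1 = 1 := by
    have := hx 0; simp at this; exact this.1.symm
  have hstep : ∀ m : ℕ, (x (m+2), x (m+1)) = f (x (m+1), x m) := by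
    intro m
    rw [← hx (m+1), Function.iterate_succ_apply', hx m]
  apply sign_aux a b ha hb x h0 h1
  · intro m hm
    have := hstep m
    rw [hpos _ _ hm] at this
    exact (Prod.mk.injEq _ _ _ _ ▸ this).1
  · intro m hm
    have := hstep m
    rw [hneg _ _ hm] at this
    exact (Prod.mk.injEq _ _ _ _ ▸ this).1

theorem both_traces_le_neg_two_not_periodic
    (a b : ℤ) (ha : a ≤ -2) (hb : b ≤ -2)
    (f : ℝ × ℝ → ℝ × ℝ)
    (hpos : ∀ x y : ℝ, 0 ≤ x → f (x, y) = ((a : ℝ) * x - y, x))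
    (hneg : ∀ x y : ℝ, x < 0 → f (x, y) = ((b : ℝ) * x - y, x)) :
    (∀ n : ℕ, 1 ≤ n → f^[n] ≠ id) ∧
    ∀ x : ℕ → ℝ, (∀ m : ℕ, f^[m] (1, 0) = (x (m + 1), x m)) →
      ∀ m : ℕ, 1 ≤ m → x (m + 1) / x m < -1 := by
  constructor
  · intro n hn hid
    -- build the orbit sequence
    set x : ℕ → ℝ := fun m => match m with
      | 0 => 0
      | k+1 => (f^[k] (1, 0)).1 with hxdef
    have hx : ∀ m : ℕ, f^[m] (1, 0) = (x (m + 1), x m) := by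
      intro m
      induction m with
      | zero => simp [hxdef]
      | succ k ihk =>
        rw [Function.iterate_succ_apply', ihk]
        rcases le_or_gt 0 (x (k+1)) with hk | hk
        · rw [hpos _ _ hk]
          refine Prod.ext ?_ rfl
          simp only [hxdef]
          rw [Function.iterate_succ_apply', ihk, hpos _ _ hk]
        · rw [hneg _ _ hk]
          refine Prod.ext ?_ rfl
          simp only [hxdef]
          rw [Function.iterate_succ_apply', ihk, hneg _ _ hk]
    have hkey := orbit_aux a b ha hb f hpos hneg x hx n hn
    have hxn0 : x n = 0 := by
      have h1 := hx n
      rw [hid] at h1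
      simp at h1
      exact h1.2.symm
    rw [hxn0] at hkey
    simp at hkey
  · intro x hx m hm
    obtain ⟨hg, hg'⟩ := orbit_aux a b ha hb f hpos hneg x hx m hm
    have hx0 : x m ≠ 0 := by
      intro h; rw [h] at hg; simp at hg
    rcases Nat.even_or_odd m with he | ho
    · have e1 : (-1:ℝ)^(m+1) = -1 := Odd.neg_one_pow he.add_one
      have e2 : (-1:ℝ)^(m+2) = 1 := Even.neg_one_pow (by
        have : Odd (m+1) := he.add_one
        exact this.add_one)
      rw [e1] at hg hg'
      rw [e2] at hg'
      have hxm : x m < 0 := by linarith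
      rw [div_lt_iff_of_neg hxm]
      linarith
    · have e1 : (-1:ℝ)^(m+1) = 1 := Even.neg_one_pow ho.add_one
      have e2 : (-1:ℝ)^(m+2) = -1 := Odd.neg_one_pow (ho.add_one.add_one)
      rw [e1] at hg hg'
      rw [e2] at hg'
      rw [div_lt_iff₀ (by linarith : (0:ℝ) < x m)]
      linarith
end

section
/- Let f be the piecewise linear map given by A₁ = [[0,-1],[1,0]] on x ≥ 0 and A₂ = [[b,-1],[1,0]] on x < 0 with integer b ≤ -3. Then f is not periodic. -/
theorem a_zero_b_le_neg_three_not_periodic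
    (b : ℤ) (hb : b ≤ -3)
    (f : ℝ × ℝ → ℝ × ℝ)
    (hpos : ∀ x y : ℝ, 0 ≤ x → f (x, y) = (-y, x))
    (hneg : ∀ x y : ℝ, x < 0 → f (x, y) = ((b : ℝ) * x - y, x)) :
    ∀ n : ℕ, 1 ≤ n → f^[n] ≠ id := by
  intro n hn hid
  have hb3 : (b : ℝ) ≤ -3 := by exact_mod_cast (show (b:ℤ) ≤ -3 from hb)
  set s : ℝ := Real.sqrt ((b:ℝ)^2 - 4) with hs
  set l : ℝ := ((b:ℝ) - s)/2 with hl
  have hs0 : 0 ≤ s := Real.sqrt_nonneg _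
  have hsq : s^2 = (b:ℝ)^2 - 4 := Real.sq_sqrt (by nlinarith)
  have hlneg : l ≤ -3/2 := by rw [hl]; linarith
  have hl0 : l < 0 := by linarith
  have heig : l^2 = (b:ℝ) * l - 1 := by
    have h1 : 2*l - (b:ℝ) = -s := by rw [hl]; ring
    have h2 : (2*l - (b:ℝ))^2 = s^2 := by rw [h1]; ring
    nlinarith [h2, hsq]
  have hl2 : 0 < l^2 := by nlinarith
  -- six-step expansion lemma
  have step6 : ∀ c : ℝ, 0 < c → f^[6] (c*l, c) = (c*l^2*l, c*l^2) := by
    intro c hc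
    have hml : (0:ℝ) < -l := by linarith
    have hcl : c*l < 0 := mul_neg_of_pos_of_neg hc hl0
    have hcl2 : 0 < c*l^2 := mul_pos hc hl2
    have hcl3 : 0 < -(c*l^2*l) := by nlinarith [mul_pos hcl2 hml]
    have e1 : f (c*l, c) = (c*l^2, c*l) := by
      rw [hneg (c*l) c hcl]
      have : (b:ℝ)*(c*l) - c = c*l^2 := by linear_combination (-c) * heig
      rw [this]
    have e2 : f (c*l^2, c*l) = (-(c*l), c*l^2) := by
      rw [hpos (c*l^2) (c*l) hcl2.le]
    have e3 : f (-(c*l), c*l^2) = (-(c*l^2), -(c*l)) := by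
      rw [hpos (-(c*l)) (c*l^2) (by linarith)]
    have e4 : f (-(c*l^2), -(c*l)) = (-(c*l^2*l), -(c*l^2)) := by
      rw [hneg (-(c*l^2)) (-(c*l)) (by linarith)]
      have : (b:ℝ)*(-(c*l^2)) - (-(c*l)) = -(c*l^2*l) := by
        linear_combination (c*l) * heig
      rw [this]
    have e5 : f (-(c*l^2*l), -(c*l^2)) = (c*l^2, -(c*l^2*l)) := by
      rw [hpos (-(c*l^2*l)) (-(c*l^2)) hcl3.le]
      have : -(-(c*l^2)) = c*l^2 := by ring
      rw [this]
    have e6 : f (c*l^2, -(c*l^2*l)) = (c*l^2*l, c*l^2) := by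
      rw [hpos (c*l^2) (-(c*l^2*l)) hcl2.le]
      have : -(-(c*l^2*l)) = c*l^2*l := by ring
      rw [this]
    show f (f (f (f (f (f (c*l, c)))))) = (c*l^2*l, c*l^2)
    rw [e1, e2, e3, e4, e5, e6]
  -- iterate
  have iter : ∀ m : ℕ, f^[6*m] (l, 1) = ((l^2)^m * l, (l^2)^m) := by
    intro m
    induction m with
    | zero => simp
    | succ k ih =>
      have hc : (0:ℝ) < (l^2)^k := pow_pos hl2 k
      have h66 : 6*(k+1) = 6 + 6*k := by ring
      rw [h66, Function.iterate_add_apply, ih]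
      rw [show ((l^2)^k * l, ((l^2)^k : ℝ)) = ((l^2)^k * l, ((l^2)^k : ℝ)) from rfl]
      rw [step6 ((l^2)^k) hc]
      have h1 : (l^2)^k * l^2 * l = (l^2)^(k+1) * l := by ring
      have h2 : ((l^2)^k * l^2 : ℝ) = (l^2)^(k+1) := by ring
      rw [h1, h2]
  have key := iter n
  have hfix : f^[6*n] (l, 1) = (l, 1) := by
    rw [mul_comm, Function.iterate_mul, hid]
    simp
  rw [hfix] at key
  have h2nd : (1:ℝ) = (l^2)^n := congrArg Prod.snd key
  have hl1 : (1:ℝ) < l^2 := by nlinarith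
  have : (1:ℝ) < (l^2)^n := one_lt_pow₀ hl1 (by omega)
  linarith
end

section
/- Let f be the piecewise linear map given by A₁ = [[1,-1],[1,0]] on x ≥ 0 and A₂ = [[b,-1],[1,0]] on x < 0 with integer b ≤ -3. Then f is not periodic. -/
theorem a_one_b_le_neg_three_not_periodic
    (b : ℤ) (hb : b ≤ -3)
    (f : ℝ × ℝ → ℝ × ℝ)
    (hpos : ∀ x y : ℝ, 0 ≤ x → f (x, y) = (x - y, x))
    (hneg : ∀ x y : ℝ, x < 0 → f (x, y) = ((b : ℝ) * x - y, x)) :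
    ∀ n : ℕ, 1 ≤ n → f^[n] ≠ id := by
  have hB : (b : ℝ) ≤ -3 := by exact_mod_cast hb
  have key : ∀ k : ℕ, ∃ a c : ℝ, 0 < c ∧ c ≤ a ∧ (2:ℝ)^k ≤ a ∧
      f^[4*k] (-1, 1) = (-a, c) := by
    intro k
    induction k with
    | zero => exact ⟨1, 1, by norm_num, le_refl _, by norm_num, by norm_num⟩
    | succ k ih =>
      obtain ⟨a, c, hc, hca, h2, hit⟩ := ih
      have ha : 0 < a := lt_of_lt_of_le hc hca
      have h1a : 1 ≤ a := le_trans (by simpa using pow_le_pow_right₀ one_le_two (Nat.zero_le _)) h2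
      set s : ℝ := -(b:ℝ)*a - c with hs
      have hsa : 2*a ≤ s := by nlinarith
      refine ⟨s, a, ha, by linarith, ?_, ?_⟩
      · calc (2:ℝ)^(k+1) = 2*2^k := by ring
          _ ≤ 2*a := by linarith
          _ ≤ s := hsa
      · have e4 : 4*(k+1) = 4 + 4*k := by ring
        rw [e4, Function.iterate_add_apply, hit]
        have h0 : f (-a, c) = (s, -a) := by
          rw [hneg (-a) c (by linarith)]
          simp only [Prod.mk.injEq, hs]
          exact ⟨by ring, trivial⟩
        have h1 : f (s, -a) = (s + a, s) := by
          rw [hpos s (-a) (by linarith)]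
          simp only [Prod.mk.injEq]
          exact ⟨by ring, trivial⟩
        have h2' : f (s + a, s) = (a, s + a) := by
          rw [hpos (s + a) s (by linarith)]
          simp only [Prod.mk.injEq]
          exact ⟨by ring, trivial⟩
        have h3 : f (a, s + a) = (-s, a) := by
          rw [hpos a (s + a) (by linarith)]
          simp only [Prod.mk.injEq]
          exact ⟨by ring, trivial⟩
        show f (f (f (f (-a, c)))) = (-s, a)
        rw [h0, h1, h2', h3]
  intro n hn hid
  obtain ⟨a, c, hc, hca, h2, hit⟩ := key (n / 4)
  have ha : 0 < a := lt_of_lt_of_le hc hca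
  have h1a : 1 ≤ a := le_trans (by simpa using pow_le_pow_right₀ one_le_two (Nat.zero_le _)) h2
  set s : ℝ := -(b:ℝ)*a - c with hs
  have hsa : 2*a ≤ s := by nlinarith
  have h0 : f (-a, c) = (s, -a) := by
    rw [hneg (-a) c (by linarith)]
    simp only [Prod.mk.injEq, hs]
    exact ⟨by ring, trivial⟩
  have h1 : f (s, -a) = (s + a, s) := by
    rw [hpos s (-a) (by linarith)]
    simp only [Prod.mk.injEq]
    exact ⟨by ring, trivial⟩
  have h2' : f (s + a, s) = (a, s + a) := by
    rw [hpos (s + a) s (by linarith)]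
    simp only [Prod.mk.injEq]
    exact ⟨by ring, trivial⟩
  have hmod := Nat.div_add_mod n 4
  have hr : n % 4 = 0 ∨ n % 4 = 1 ∨ n % 4 = 2 ∨ n % 4 = 3 := by omega
  have heq : f^[n] (-1, 1) = (-1, 1) := by rw [hid]; rfl
  have hn4 : f^[n] (-1, 1) = f^[n % 4] (-a, c) := by
    rw [← hit, ← Function.iterate_add_apply]
    congr 1
    omega
  rcases hr with h | h | h | h
  · -- n = 4 * (n/4), n ≥ 1 so n/4 ≥ 1, so a ≥ 2
    have hk : 1 ≤ n / 4 := by omega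
    have : (2:ℝ) ≤ a := le_trans (by
      calc (2:ℝ) = 2^1 := by norm_num
        _ ≤ 2^(n/4) := by
          apply pow_le_pow_right₀ (by norm_num) hk) h2
    rw [h] at hn4
    simp only [Function.iterate_zero, id_eq] at hn4
    rw [heq] at hn4
    have := congrArg Prod.fst hn4
    simp at this
    linarith
  · rw [h] at hn4
    simp only [Function.iterate_one] at hn4
    rw [heq, h0] at hn4
    have := congrArg Prod.fst hn4
    simp at this
    linarith
  · rw [h] at hn4
    rw [heq] at hn4
    have : ((-1:ℝ), (1:ℝ)) = (s + a, s) := by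
      rw [hn4]
      show f (f (-a, c)) = _
      rw [h0, h1]
    have := congrArg Prod.fst this
    simp at this
    linarith
  · rw [h] at hn4
    rw [heq] at hn4
    have h3 : f (a, s + a) = (-s, a) := by
      rw [hpos a (s + a) (by linarith)]
      simp only [Prod.mk.injEq]
      exact ⟨by ring, trivial⟩
    have : ((-1:ℝ), (1:ℝ)) = (a, s + a) := by
      rw [hn4]
      show f (f (f (-a, c))) = _
      rw [h0, h1, h2']
    have := congrArg Prod.fst this
    simp at this
    linarith
end

section
/- Let f be the piecewise linear map given by A₁ = [[-1,-1],[1,0]] on x ≥ 0 and A₂ = [[b,-1],[1,0]] on x < 0 with integer b ≤ -4. Then f is not periodic. -/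
theorem a_neg_one_b_le_neg_four_not_periodic
    (b : ℤ) (hb : b ≤ -4)
    (f : ℝ × ℝ → ℝ × ℝ)
    (hpos : ∀ x y : ℝ, 0 ≤ x → f (x, y) = (-x - y, x))
    (hneg : ∀ x y : ℝ, x < 0 → f (x, y) = ((b : ℝ) * x - y, x)) :
    ∀ n : ℕ, 1 ≤ n → f^[n] ≠ id := by
  intro n hn hid
  have hb' : (b : ℝ) ≤ -4 := by exact_mod_cast hb
  have key : ∀ k : ℕ,
      ((f^[2*k] ((-1 : ℝ), (0 : ℝ))).1 ≤ -1 - 2*(k : ℝ)) ∧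
      (0 ≤ (f^[2*k] ((-1 : ℝ), (0 : ℝ))).2) ∧
      ((f^[2*k] ((-1 : ℝ), (0 : ℝ))).2 ≤ -2*(f^[2*k] ((-1 : ℝ), (0 : ℝ))).1 - 2) := by
    intro k
    induction k with
    | zero => norm_num
    | succ k ih =>
      obtain ⟨h1, h2, h3⟩ := ih
      set q := f^[2*k] ((-1 : ℝ), (0 : ℝ)) with hq
      have hk0 : (0 : ℝ) ≤ (k : ℝ) := Nat.cast_nonneg k
      have hx : q.1 ≤ -1 := by linarith
      have hbx : -4 * q.1 ≤ (b : ℝ) * q.1 := by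
        nlinarith [mul_nonneg (show (0:ℝ) ≤ -(b:ℝ) - 4 by linarith)
          (show (0:ℝ) ≤ -q.1 by linarith)]
      have hnn : 0 ≤ (b : ℝ) * q.1 - q.2 := by linarith
      have hstep : f^[2*(k+1)] ((-1 : ℝ), (0 : ℝ)) = f (f q) := by
        rw [show 2*(k+1) = (2*k) + 1 + 1 by ring, Function.iterate_succ_apply',
          Function.iterate_succ_apply', hq]
      have hf1 : f q = ((b : ℝ) * q.1 - q.2, q.1) := by
        have h := hneg q.1 q.2 (by linarith)
        rwa [Prod.mk.eta] at h
      have hf2 : f (f q) = (-((b : ℝ) * q.1 - q.2) - q.1, (b : ℝ) * q.1 - q.2) := by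
        rw [hf1]; exact hpos _ _ hnn
      rw [hstep, hf2]
      push_cast
      refine ⟨by linarith, by linarith, by linarith⟩
  have h2n : f^[2*n] ((-1 : ℝ), (0 : ℝ)) = ((-1 : ℝ), (0 : ℝ)) := by
    have : f^[2*n] = (f^[n])^[2] := by rw [mul_comm]; exact Function.iterate_mul f n 2
    rw [this, hid]
    simp
  have := (key n).1
  rw [h2n] at this
  have hn' : (1 : ℝ) ≤ (n : ℝ) := by exact_mod_cast hn
  norm_num at this
  linarith
end

section
/- Every admissible sequence m_0, …, m_{n-1} of a piecewise linear periodic map of period n ≥ 3 and rotation number 1/n has sum equal to 3n - 12. Equivalently, if e_0, …, e_{n-1} ∈ ℤ² are vertices of a fundamental polygon (consecutive determinants det[e_i, e_{i+1}] = 1 for all i mod n, vectors in anticlockwise order) with e_{i-1} + e_{i+1} = m_i e_i, then Σ_{i=0}^{n-1} m_i = 3n - 12. -/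
open Real Finset

/-- 2x2 determinant of two integer vectors. -/
def adm12Dt (a b : ℤ × ℤ) : ℤ := a.1 * b.2 - a.2 * b.1

lemma adm12Dt_skew (a b : ℤ × ℤ) : adm12Dt a b = - adm12Dt b a := by
  simp [adm12Dt]; ring

/-- key linear-algebra identity: with unimodular consecutive pairs,
    `e i + e (i+2) = det(e i, e (i+2)) • e (i+1)`. -/
lemma adm12_L0 (e : ℕ → ℤ × ℤ) (hdet : ∀ i, adm12Dt (e i) (e (i + 1)) = 1) (i : ℕ) :
    e i + e (i + 2) = adm12Dt (e i) (e (i + 2)) • e (i + 1) := by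
  have h1 := hdet i
  have h2 := hdet (i + 1)
  unfold adm12Dt at *
  have e2 : i + 1 + 1 = i + 2 := by ring
  rw [e2] at h2
  apply Prod.ext
  · simp only [Prod.fst_add, Prod.smul_fst, smul_eq_mul]
    linear_combination (- (e (i+2)).1) * h1 - (e i).1 * h2
  · simp only [Prod.snd_add, Prod.smul_snd, smul_eq_mul]
    linear_combination (- (e (i+2)).2) * h1 - (e i).2 * h2

/-- Bundled hypotheses. -/
structure Adm12 (n : ℕ) (e : ℕ → ℤ × ℤ) (r θ : ℕ → ℝ) : Prop where
  hper : ∀ i, e (i + n) = e i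
  hdet : ∀ i, adm12Dt (e i) (e (i + 1)) = 1
  hr : ∀ i, 0 < r i
  hθ : ∀ i, θ i < θ (i + 1)
  hθp : ∀ i, θ (i + n) = θ i + 2 * Real.pi
  hre : ∀ i, ((e i).1 : ℝ) = r i * Real.cos (θ i) ∧ ((e i).2 : ℝ) = r i * Real.sin (θ i)

namespace Adm12

variable {n : ℕ} {e : ℕ → ℤ × ℤ} {r θ : ℕ → ℝ}

lemma mono (A : Adm12 n e r θ) : StrictMono θ := strictMono_nat_of_lt_succ A.hθ

/-- bridge between determinant and angles -/
lemma bridge (A : Adm12 n e r θ) (i j : ℕ) :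
    ((adm12Dt (e i) (e j) : ℤ) : ℝ) = r i * r j * Real.sin (θ j - θ i) := by
  obtain ⟨hx1, hy1⟩ := A.hre i
  obtain ⟨hx2, hy2⟩ := A.hre j
  unfold adm12Dt
  push_cast
  rw [hx1, hy1, hx2, hy2, Real.sin_sub]
  ring

lemma sin_pos_of_dt_pos (A : Adm12 n e r θ) {i j : ℕ} (h : 1 ≤ adm12Dt (e i) (e j)) :
    0 < Real.sin (θ j - θ i) := by
  have hb := A.bridge i j
  have h1 : (1 : ℝ) ≤ r i * r j * Real.sin (θ j - θ i) := by
    rw [← hb]; exact_mod_cast h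
  have hri := A.hr i
  have hrj := A.hr j
  nlinarith [mul_pos hri hrj]

/-- an angle in (0, 2π) with positive sine is < π. -/
lemma lt_pi_of_sin_pos {x : ℝ} (h0 : 0 < x) (h2 : x < 2 * Real.pi) (hs : 0 < Real.sin x) :
    x < Real.pi := by
  by_contra h
  push_neg at h
  have : 0 ≤ Real.sin (x - Real.pi) :=
    Real.sin_nonneg_of_nonneg_of_le_pi (by linarith) (by linarith)
  rw [Real.sin_sub_pi] at this
  linarith

lemma gap_pos (A : Adm12 n e r θ) (i : ℕ) : 0 < θ (i + 1) - θ i := by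
  have := A.hθ i; linarith

lemma gap_lt_pi (A : Adm12 n e r θ) (hn : 3 ≤ n) (i : ℕ) : θ (i + 1) - θ i < Real.pi := by
  have h2 : θ (i + 1) - θ i < 2 * Real.pi := by
    have : θ (i + 1) < θ (i + n) := A.mono (by omega)
    have := A.hθp i
    linarith
  exact lt_pi_of_sin_pos (A.gap_pos i) h2 (A.sin_pos_of_dt_pos (by rw [A.hdet i]))

/-- double gap is at least π where M ≤ 0 -/
lemma dgap_ge (A : Adm12 n e r θ) (hn : 3 ≤ n) {v : ℕ} (h : adm12Dt (e v) (e (v + 2)) ≤ 0) :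
    Real.pi ≤ θ (v + 2) - θ v := by
  by_contra hlt
  push_neg at hlt
  have h0 : 0 < θ (v + 2) - θ v := by
    have h1 := A.hθ v; have h2 := A.hθ (v + 1)
    have : v + 1 + 1 = v + 2 := by ring
    rw [this] at h2; linarith
  have hs : 0 < Real.sin (θ (v + 2) - θ v) := Real.sin_pos_of_pos_of_lt_pi h0 hlt
  have hb := A.bridge v (v + 2)
  have : (0:ℝ) < ((adm12Dt (e v) (e (v + 2)) : ℤ) : ℝ) := by
    rw [hb]
    have := A.hr v; have := A.hr (v + 2)
    positivity
  have : (0:ℤ) < adm12Dt (e v) (e (v + 2)) := by exact_mod_cast this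
  omega

/-- run lemma: a run of M ≥ 2 keeps total rotation < π. -/
lemma run (A : Adm12 n e r θ) (hn : 3 ≤ n) (s k : ℕ)
    (h2 : ∀ j < k, 2 ≤ adm12Dt (e (s + j)) (e (s + j + 2))) :
    θ (s + k + 1) - θ s < Real.pi := by
  suffices H : ∀ k, (∀ j < k, 2 ≤ adm12Dt (e (s + j)) (e (s + j + 2))) →
      (1 ≤ adm12Dt (e s) (e (s + k + 1)) ∧
       adm12Dt (e s) (e (s + k)) ≤ adm12Dt (e s) (e (s + k + 1)) ∧
       θ (s + k + 1) - θ s < Real.pi) by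
    exact (H k h2).2.2
  intro k
  induction k with
  | zero =>
    intro _
    refine ⟨by rw [A.hdet s], ?_, ?_⟩
    · have h0 : adm12Dt (e s) (e (s + 0)) = 0 := by unfold adm12Dt; ring_nf
      rw [h0, A.hdet s]; norm_num
    · simpa using A.gap_lt_pi hn s
  | succ k IH =>
    intro h2
    obtain ⟨hA1, hA2, hang⟩ := IH (fun j hj => h2 j (by omega))
    have hM := h2 k (by omega)
    have hrec := adm12_L0 e A.hdet (s + k)
    have hx := congrArg Prod.fst hrec
    have hy := congrArg Prod.snd hrec
    simp only [Prod.fst_add, Prod.snd_add, Prod.smul_fst, Prod.smul_snd, smul_eq_mul] at hx hy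
    have hlin : adm12Dt (e s) (e (s + k)) + adm12Dt (e s) (e (s + k + 2)) =
        adm12Dt (e (s + k)) (e (s + k + 2)) * adm12Dt (e s) (e (s + k + 1)) := by
      set M := adm12Dt (e (s + k)) (e (s + k + 2)) with hMdef
      unfold adm12Dt
      linear_combination (e s).1 * hy - (e s).2 * hx
    have hmul : 2 * adm12Dt (e s) (e (s + k + 1)) ≤
        adm12Dt (e (s + k)) (e (s + k + 2)) * adm12Dt (e s) (e (s + k + 1)) :=
      mul_le_mul_of_nonneg_right hM (by linarith)
    have e1 : s + k + 1 + 1 = s + k + 2 := by omega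
    have e2 : s + (k + 1) = s + k + 1 := by omega
    rw [e2, e1]
    refine ⟨by linarith, by linarith, ?_⟩
    have hpos : 0 < θ (s + k + 2) - θ s := sub_pos.mpr (A.mono (by omega))
    have hgap := A.gap_lt_pi hn (s + k + 1)
    rw [e1] at hgap
    have hlt : θ (s + k + 2) - θ s < 2 * Real.pi := by linarith
    have hsin : 0 < Real.sin (θ (s + k + 2) - θ s) :=
      A.sin_pos_of_dt_pos (by linarith)
    exact lt_pi_of_sin_pos hpos hlt hsin

/-- two non-adjacent double gaps ≥ π are impossible (n ≥ 5). -/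
lemma two_dgaps (A : Adm12 n e r θ) (hn : 5 ≤ n) (x y : ℕ)
    (hxy : x + 2 ≤ y) (hyn : y + 2 ≤ x + n)
    (h1 : Real.pi ≤ θ (x + 2) - θ x) (h2 : Real.pi ≤ θ (y + 2) - θ y) : False := by
  set F : ℕ → ℝ := fun i => θ (x + i + 1) - θ (x + i) with hF
  set k := y - x with hk
  have hk2 : 2 ≤ k := by omega
  have hkn : k + 1 < n := by omega
  set S4 : Finset ℕ := {0, 1, k, k + 1} with hS4
  have hn0 : (0:ℕ) ∉ ({1, k, k + 1} : Finset ℕ) := by simp; omega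
  have hn1 : (1:ℕ) ∉ ({k, k + 1} : Finset ℕ) := by simp; omega
  have hn2 : k ∉ ({k + 1} : Finset ℕ) := by simp
  have hsub : S4 ⊆ Finset.range n := by
    intro t ht
    simp only [hS4, Finset.mem_insert, Finset.mem_singleton] at ht
    simp only [Finset.mem_range]
    omega
  have htot : ∑ i ∈ Finset.range n, F i = 2 * Real.pi := by
    have hts : ∀ i : ℕ, F i = (fun j => θ (x + j)) (i + 1) - (fun j => θ (x + j)) i := by
      intro i
      show θ (x + i + 1) - θ (x + i) = θ (x + (i + 1)) - θ (x + i)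
      rw [show x + (i + 1) = x + i + 1 from by omega]
    calc ∑ i ∈ Finset.range n, F i
        = ∑ i ∈ Finset.range n, ((fun j => θ (x + j)) (i + 1) - (fun j => θ (x + j)) i) :=
          Finset.sum_congr rfl (fun i _ => hts i)
      _ = θ (x + n) - θ (x + 0) := Finset.sum_range_sub (fun j => θ (x + j)) n
      _ = 2 * Real.pi := by
          have := A.hθp x
          have h0 : x + 0 = x := rfl
          rw [h0]
          linarith
  have hS4sum : ∑ i ∈ S4, F i = (θ (x + 2) - θ x) + (θ (y + 2) - θ y) := by
    rw [hS4]
    rw [Finset.sum_insert hn0, Finset.sum_insert hn1, Finset.sum_insert hn2,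
      Finset.sum_singleton]
    have e1 : x + 0 = x := by omega
    have e2 : x + 0 + 1 = x + 1 := by omega
    have e3 : x + 1 + 1 = x + 2 := by omega
    have e4 : x + k = y := by omega
    have e5 : x + k + 1 = y + 1 := by omega
    have e6 : x + (k + 1) = y + 1 := by omega
    have e7 : x + (k + 1) + 1 = y + 2 := by omega
    simp only [hF, e1, e2, e3, e4, e5, e6, e7]
    ring
  have hcard : S4.card = 4 := by
    rw [hS4, Finset.card_insert_of_notMem hn0, Finset.card_insert_of_notMem hn1,
      Finset.card_insert_of_notMem hn2, Finset.card_singleton]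
  have hne : (Finset.range n \ S4).Nonempty := by
    rw [← Finset.card_pos, Finset.card_sdiff_of_subset hsub, Finset.card_range, hcard]
    omega
  have hrest : 0 < ∑ i ∈ Finset.range n \ S4, F i := by
    apply Finset.sum_pos _ hne
    intro i _
    exact A.gap_pos (x + i)
  rw [← Finset.sum_sdiff hsub, hS4sum] at htot
  linarith

/-- existence of a blow-downable vertex for n ≥ 5. -/
lemma exists_one (A : Adm12 n e r θ) (hn : 5 ≤ n) :
    ∃ v, adm12Dt (e v) (e (v + 2)) = 1 := by
  classical
  by_contra hno
  push_neg at hno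
  have hn3 : 3 ≤ n := by omega
  set M : ℕ → ℤ := fun v => adm12Dt (e v) (e (v + 2)) with hM
  have hMper : ∀ v, M (v + n) = M v := by
    intro v
    simp only [hM]
    rw [show v + n + 2 = v + 2 + n from by omega, A.hper v, A.hper (v + 2)]
  have hdg : ∀ v, M v ≤ 0 → Real.pi ≤ θ (v + 2) - θ v := by
    intro v h
    exact A.dgap_ge hn3 (by simpa [hM] using h)
  have hrun : ∀ s t : ℕ, s < t → (∀ j, s < j → j < t → 2 ≤ M j) →
      θ (t + 1) - θ (s + 1) < Real.pi := by
    intro s t hst hbet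
    have hr := A.run hn3 (s + 1) (t - s - 1) ?_
    · rw [show s + 1 + (t - s - 1) + 1 = t + 1 from by omega] at hr
      exact hr
    · intro j hj
      have := hbet (s + 1 + j) (by omega) (by omega)
      simpa [hM] using this
  have hex : ∃ s, M s ≤ 0 := by
    by_contra hall
    push_neg at hall
    have hall2 : ∀ v, 2 ≤ M v := by
      intro v
      have h1 := hall v
      have h2 := hno v
      simp only [hM] at h1 ⊢
      omega
    have hr := A.run hn3 0 n (fun j _ => by simpa [hM] using hall2 (0 + j))
    rw [show (0:ℕ) + n + 1 = 1 + n from by omega, A.hθp 1] at hr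
    have h01 := A.hθ 0
    have hpi := Real.pi_pos
    rw [show (0:ℕ) + 1 = 1 from rfl] at h01
    linarith
  obtain ⟨s₁, hs₁⟩ := hex
  have hnext : ∀ s, M s ≤ 0 → ∃ t, s < t ∧ t ≤ s + n ∧ M t ≤ 0 ∧
      ∀ j, s < j → j < t → 2 ≤ M j := by
    intro s hs
    have hPex : ∃ k, 0 < k ∧ M (s + k) ≤ 0 := ⟨n, by omega, by rw [hMper]; exact hs⟩
    obtain ⟨hk0, hkM⟩ := Nat.find_spec hPex
    refine ⟨s + Nat.find hPex, by omega, ?_, hkM, ?_⟩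
    · have : Nat.find hPex ≤ n := Nat.find_le ⟨by omega, by rw [hMper]; exact hs⟩
      omega
    · intro j hj1 hj2
      have hlt : j - s < Nat.find hPex := by omega
      have hmin := Nat.find_min hPex hlt
      push_neg at hmin
      have := hmin (by omega)
      rw [show s + (j - s) = j from by omega] at this
      have hj := hno j
      simp only [hM] at this ⊢
      omega
  obtain ⟨s₂, h12, h12n, hs₂, hbet₁⟩ := hnext s₁ hs₁
  have hpi := Real.pi_pos
  have h12n' : s₂ < s₁ + n := by
    rcases eq_or_lt_of_le h12n with heq | h
    · exfalso
      have hr := hrun s₁ s₂ h12 hbet₁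
      rw [heq, show s₁ + n + 1 = s₁ + 1 + n from by omega, A.hθp (s₁ + 1)] at hr
      linarith
    · exact h
  obtain ⟨s₃, h23, h23n, hs₃, hbet₂⟩ := hnext s₂ hs₂
  have h3le : s₃ ≤ s₁ + n := by
    by_contra hgt
    push_neg at hgt
    have := hbet₂ (s₁ + n) (by omega) hgt
    rw [hMper] at this
    omega
  have h3lt : s₃ < s₁ + n := by
    rcases eq_or_lt_of_le h3le with heq | h
    · exfalso
      have hr1 := hrun s₁ s₂ h12 hbet₁
      have hr2 := hrun s₂ s₃ h23 hbet₂
      rw [heq, show s₁ + n + 1 = s₁ + 1 + n from by omega, A.hθp (s₁ + 1)] at hr2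
      linarith
    · exact h
  have D1 := hdg s₁ hs₁
  have D2 := hdg s₂ hs₂
  have D3 := hdg s₃ hs₃
  rcases le_or_gt (s₃ + 2) (s₁ + n) with hd2 | hd1
  · exact A.two_dgaps hn s₁ s₃ (by omega) hd2 D1 D3
  · have hd : s₁ + n = s₃ + 1 := by omega
    have D1' : Real.pi ≤ θ (s₁ + n + 2) - θ (s₁ + n) := by
      rw [show s₁ + n + 2 = s₁ + 2 + n from by omega, A.hθp (s₁ + 2), A.hθp s₁]
      linarith
    rcases le_or_gt (s₁ + 2) s₂ with hb2 | hb1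
    · exact A.two_dgaps hn s₂ (s₁ + n) (by omega) (by omega) D2 D1'
    · exact A.two_dgaps hn s₂ s₃ (by omega) (by omega) D2 D3

lemma shift (A : Adm12 n e r θ) (s : ℕ) :
    Adm12 n (fun i => e (i + s)) (fun i => r (i + s)) (fun i => θ (i + s)) := by
  constructor
  · intro i
    show e (i + n + s) = e (i + s)
    rw [show i + n + s = i + s + n from by omega, A.hper]
  · intro i
    show adm12Dt (e (i + s)) (e (i + 1 + s)) = 1
    rw [show i + 1 + s = i + s + 1 from by omega]
    exact A.hdet (i + s)
  · intro i; exact A.hr _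
  · intro i
    show θ (i + s) < θ (i + 1 + s)
    rw [show i + 1 + s = i + s + 1 from by omega]
    exact A.hθ (i + s)
  · intro i
    show θ (i + n + s) = θ (i + s) + 2 * Real.pi
    rw [show i + n + s = i + s + n from by omega]
    exact A.hθp (i + s)
  · intro i; exact A.hre _

end Adm12

lemma adm12Dt_sub_left (a b c : ℤ × ℤ) :
    adm12Dt (a - b) c = adm12Dt a c - adm12Dt b c := by
  simp [adm12Dt]; ring

lemma adm12Dt_sub_right (a b c : ℤ × ℤ) :
    adm12Dt a (b - c) = adm12Dt a b - adm12Dt a c := by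
  simp [adm12Dt]; ring

lemma adm12_per_mod {α : Type*} (f : ℕ → α) (c : ℕ) (hc : 0 < c)
    (h : ∀ i, f (i + c) = f i) : ∀ i, f i = f (i % c) := by
  intro i
  induction i using Nat.strong_induction_on with
  | _ i IH =>
    rcases lt_or_ge i c with hlt | hge
    · rw [Nat.mod_eq_of_lt hlt]
    · have e1 : i = (i - c) + c := by omega
      rw [e1, h (i - c), IH (i - c) (by omega)]
      congr 1
      rw [Nat.add_mod_right]

lemma adm12_sum_shift (F : ℕ → ℤ) (n : ℕ) (hF : ∀ i, F (i + n) = F i) :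
    ∀ s, ∑ i ∈ Finset.range n, F (i + s) = ∑ i ∈ Finset.range n, F i := by
  intro s
  induction s with
  | zero => simp
  | succ s IH =>
    rw [← IH]
    have h1 : ∑ i ∈ Finset.range n, F (i + (s + 1)) =
        ∑ i ∈ Finset.range n, F (i + 1 + s) := by
      apply Finset.sum_congr rfl
      intro i _
      congr 1
      omega
    have h2 := Finset.sum_range_succ (fun i => F (i + s)) n
    have h3 := Finset.sum_range_succ' (fun i => F (i + s)) n
    have h4 : F (n + s) = F (0 + s) := by
      rw [show n + s = s + n from by omega, hF s, show (0:ℕ) + s = s from by omega]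
    rw [h1]
    have h5 : ∑ i ∈ Finset.range n, F (i + 1 + s) = ∑ i ∈ Finset.range n, F (i + s) := by
      linarith [h2, h3, h4]
    rw [h5]

lemma adm12_mod_succ (c i : ℕ) (hc : 0 < c) :
    ((i + 1) % c = i % c + 1 ∧ (i + 1) / c = i / c ∧ i % c + 1 < c) ∨
    ((i + 1) % c = 0 ∧ (i + 1) / c = i / c + 1 ∧ i % c + 1 = c) := by
  have hd := Nat.div_add_mod i c
  have hm : i % c < c := Nat.mod_lt _ hc
  rcases lt_or_ge (i % c + 1) c with hlt | hge
  · left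
    have hcomm : (i / c) * c = c * (i / c) := Nat.mul_comm _ _
    have h1 : i + 1 = (i % c + 1) + (i / c) * c := by omega
    refine ⟨?_, ?_, hlt⟩
    · rw [h1, Nat.add_mul_mod_self_right, Nat.mod_eq_of_lt hlt]
    · rw [h1, Nat.add_mul_div_right _ _ hc, Nat.div_eq_of_lt hlt]
      omega
  · right
    have hceq : i % c + 1 = c := by omega
    have h1 : i + 1 = (i / c + 1) * c := by
      have h2 : (i / c + 1) * c = c * (i / c) + c := by ring
      linarith [hd]
    refine ⟨?_, ?_, hceq⟩
    · rw [h1, Nat.mul_mod_left]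
    · rw [h1, Nat.mul_div_cancel _ hc]

/-- the auxiliary main theorem. -/
theorem adm12_aux : ∀ n, 3 ≤ n → ∀ (e : ℕ → ℤ × ℤ) (r θ : ℕ → ℝ), Adm12 n e r θ →
    ∑ i ∈ Finset.range n, adm12Dt (e i) (e (i + 2)) = 3 * (n : ℤ) - 12 := by
  intro n
  induction n using Nat.strong_induction_on with
  | _ n IH =>
    intro hn e r θ A
    rcases (by omega : n = 3 ∨ n = 4 ∨ 5 ≤ n) with h3 | h4 | h5
    · subst h3
      have hval : ∀ i, adm12Dt (e i) (e (i + 2)) = -1 := by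
        intro i
        have h1 := A.hdet (i + 2)
        have h2 := A.hper i
        rw [show i + 2 + 1 = i + 3 from by omega, h2] at h1
        have h3 := adm12Dt_skew (e i) (e (i + 2))
        omega
      simp only [Finset.sum_range_succ, Finset.sum_range_zero]
      rw [hval 0, hval 1, hval 2]
      norm_num
    · subst h4
      have hval : ∀ i, adm12Dt (e (i + 2)) (e (i + 2 + 2)) = - adm12Dt (e i) (e (i + 2)) := by
        intro i
        rw [show i + 2 + 2 = i + 4 from by omega]
        rw [A.hper i]
        exact adm12Dt_skew _ _
      simp only [Finset.sum_range_succ, Finset.sum_range_zero]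
      have h0 := hval 0
      have h1 := hval 1
      norm_num at h0 h1 ⊢
      rw [h0, h1]
      ring
    · obtain ⟨k, rfl⟩ : ∃ k, n = k + 5 := ⟨n - 5, by omega⟩
      obtain ⟨v, hv⟩ := A.exists_one h5
      set t := v + 2 with ht
      set E : ℕ → ℤ × ℤ := fun i => e (i + t) with hE
      set R : ℕ → ℝ := fun i => r (i + t) with hR
      set Θ : ℕ → ℝ := fun i => θ (i + t) with hΘ
      have A' : Adm12 (k + 5) E R Θ := A.shift t
      have hMn2 : adm12Dt (E (k + 3)) (E (k + 5)) = 1 := by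
        show adm12Dt (e (k + 3 + t)) (e (k + 5 + t)) = 1
        rw [show k + 3 + t = v + (k + 5) from by omega,
            show k + 5 + t = v + 2 + (k + 5) from by omega, A.hper v, A.hper (v + 2)]
        exact hv
      set f : ℕ → ℤ × ℤ := fun i => E (i % (k + 4)) with hf
      set ρ : ℕ → ℝ := fun i => R (i % (k + 4)) with hρ
      set ψ : ℕ → ℝ := fun i => Θ (i % (k + 4)) + ((i / (k + 4) : ℕ) : ℝ) * (2 * Real.pi)
        with hψ
      have hc0 : 0 < k + 4 := by omega
      have hper0 : E (k + 5) = E 0 := by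
        have := A'.hper 0
        rwa [show 0 + (k + 5) = k + 5 from by omega] at this
      have B : Adm12 (k + 4) f ρ ψ := by
        constructor
        · intro i
          show E ((i + (k + 4)) % (k + 4)) = E (i % (k + 4))
          rw [Nat.add_mod_right]
        · intro i
          show adm12Dt (E (i % (k + 4))) (E ((i + 1) % (k + 4))) = 1
          rcases adm12_mod_succ (k + 4) i hc0 with ⟨hm1, _, hm3⟩ | ⟨hm1, _, hm3⟩
          · rw [hm1]
            exact A'.hdet (i % (k + 4))
          · rw [hm1]
            have hj : i % (k + 4) = k + 3 := by omega
            rw [hj, ← hper0]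
            exact hMn2
        · intro i
          exact A'.hr _
        · intro i
          show Θ (i % (k + 4)) + ((i / (k + 4) : ℕ) : ℝ) * (2 * Real.pi) <
              Θ ((i + 1) % (k + 4)) + (((i + 1) / (k + 4) : ℕ) : ℝ) * (2 * Real.pi)
          rcases adm12_mod_succ (k + 4) i hc0 with ⟨hm1, hm2, hm3⟩ | ⟨hm1, hm2, hm3⟩
          · rw [hm1, hm2]
            have := A'.hθ (i % (k + 4))
            linarith
          · rw [hm1, hm2]
            have hj : i % (k + 4) = k + 3 := by omega
            rw [hj]
            have hmono := (Adm12.mono A') (show k + 3 < k + 5 from by omega)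
            have hperθ := A'.hθp 0
            rw [show 0 + (k + 5) = k + 5 from by omega] at hperθ
            push_cast
            linarith
        · intro i
          show Θ ((i + (k + 4)) % (k + 4)) + (((i + (k + 4)) / (k + 4) : ℕ) : ℝ) * (2 * Real.pi) =
              Θ (i % (k + 4)) + ((i / (k + 4) : ℕ) : ℝ) * (2 * Real.pi) + 2 * Real.pi
          rw [Nat.add_mod_right, Nat.add_div_right _ hc0]
          push_cast
          ring
        · intro i
          obtain ⟨hx, hy⟩ := A'.hre (i % (k + 4))
          constructor
          · show ((E (i % (k + 4))).1 : ℝ) =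
                R (i % (k + 4)) * Real.cos (Θ (i % (k + 4)) + ((i / (k + 4) : ℕ) : ℝ) * (2 * Real.pi))
            rw [Real.cos_add_nat_mul_two_pi]
            exact hx
          · show ((E (i % (k + 4))).2 : ℝ) =
                R (i % (k + 4)) * Real.sin (Θ (i % (k + 4)) + ((i / (k + 4) : ℕ) : ℝ) * (2 * Real.pi))
            rw [Real.sin_add_nat_mul_two_pi]
            exact hy
      have hIH := IH (k + 4) (by omega) (by omega) f ρ ψ B
      -- algebraic bookkeeping
      have hL0 := adm12_L0 E A'.hdet (k + 3)
      rw [show k + 3 + 2 = k + 5 from by omega, show k + 3 + 1 = k + 4 from by omega,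
          hMn2, one_smul] at hL0
      have hvec1 : E (k + 5) = E (k + 4) - E (k + 3) := by
        rw [eq_sub_iff_add_eq, add_comm]
        exact hL0
      have hvec2 : E (k + 3) = E (k + 4) - E (k + 5) := by
        rw [eq_sub_iff_add_eq]
        exact hL0
      have hper1 : E (k + 6) = E 1 := by
        have := A'.hper 1
        rwa [show 1 + (k + 5) = k + 6 from by omega] at this
      have hdk2 : adm12Dt (E (k + 2)) (E (k + 3)) = 1 := by
        have := A'.hdet (k + 2)
        rwa [show k + 2 + 1 = k + 3 from by omega] at this
      have hdk5 : adm12Dt (E (k + 5)) (E (k + 6)) = 1 := by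
        have := A'.hdet (k + 5)
        rwa [show k + 5 + 1 = k + 6 from by omega] at this
      have hT1 : adm12Dt (f (k + 2)) (f (k + 2 + 2)) =
          adm12Dt (E (k + 2)) (E (k + 4)) - 1 := by
        show adm12Dt (E ((k + 2) % (k + 4))) (E ((k + 2 + 2) % (k + 4))) = _
        rw [Nat.mod_eq_of_lt (show k + 2 < k + 4 from by omega),
            show k + 2 + 2 = k + 4 from by omega, Nat.mod_self, ← hper0, hvec1,
            adm12Dt_sub_right, hdk2]
      have hT2 : adm12Dt (f (k + 3)) (f (k + 3 + 2)) =
          adm12Dt (E (k + 4)) (E (k + 6)) - 1 := by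
        show adm12Dt (E ((k + 3) % (k + 4))) (E ((k + 3 + 2) % (k + 4))) = _
        rw [Nat.mod_eq_of_lt (show k + 3 < k + 4 from by omega),
            show k + 3 + 2 = k + 5 from by omega]
        rw [show (k + 5) % (k + 4) = 1 from by
              rw [show k + 5 = 1 + (k + 4) from by omega, Nat.add_mod_right,
                Nat.mod_eq_of_lt (show 1 < k + 4 from by omega)]]
        rw [← hper1, hvec2, adm12Dt_sub_left, hdk5]
      have hterm : ∀ i ∈ Finset.range (k + 2),
          adm12Dt (f i) (f (i + 2)) = adm12Dt (E i) (E (i + 2)) := by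
        intro i hi
        rw [Finset.mem_range] at hi
        show adm12Dt (E (i % (k + 4))) (E ((i + 2) % (k + 4))) = _
        rw [Nat.mod_eq_of_lt (by omega), Nat.mod_eq_of_lt (by omega)]
      have e1 := Finset.sum_range_succ (fun i => adm12Dt (f i) (f (i + 2))) (k + 3)
      have e2 := Finset.sum_range_succ (fun i => adm12Dt (f i) (f (i + 2))) (k + 2)
      rw [show k + 3 + 1 = k + 4 from by omega] at e1
      rw [show k + 2 + 1 = k + 3 from by omega] at e2
      have o1 := Finset.sum_range_succ (fun i => adm12Dt (E i) (E (i + 2))) (k + 4)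
      have o2 := Finset.sum_range_succ (fun i => adm12Dt (E i) (E (i + 2))) (k + 3)
      have o3 := Finset.sum_range_succ (fun i => adm12Dt (E i) (E (i + 2))) (k + 2)
      rw [show k + 4 + 1 = k + 5 from by omega] at o1
      rw [show k + 3 + 1 = k + 4 from by omega] at o2
      rw [show k + 2 + 1 = k + 3 from by omega] at o3

      rw [Finset.sum_congr rfl hterm] at e2
      have hold : ∑ i ∈ Finset.range (k + 5), adm12Dt (E i) (E (i + 2)) =
          3 * ((k + 5 : ℕ) : ℤ) - 12 := by
        rw [o1, o2, o3]
        rw [e1, e2] at hIH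
        rw [hT1, hT2] at hIH
        rw [show k + 2 + 2 = k + 4 from by omega, show k + 3 + 2 = k + 5 from by omega,
            show k + 4 + 2 = k + 6 from by omega]
        rw [hMn2]
        push_cast at hIH ⊢
        linarith
      -- transfer to the original sequence
      have hperF : ∀ i, adm12Dt (e (i + (k + 5))) (e (i + (k + 5) + 2)) =
          adm12Dt (e i) (e (i + 2)) := by
        intro i
        rw [show i + (k + 5) + 2 = i + 2 + (k + 5) from by omega, A.hper i, A.hper (i + 2)]
      have hshift := adm12_sum_shift (fun i => adm12Dt (e i) (e (i + 2))) (k + 5)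
        (fun i => hperF i) t
      have hEe : ∑ i ∈ Finset.range (k + 5), adm12Dt (E i) (E (i + 2)) =
          ∑ i ∈ Finset.range (k + 5), adm12Dt (e (i + t)) (e (i + t + 2)) := by
        apply Finset.sum_congr rfl
        intro i _
        show adm12Dt (e (i + t)) (e (i + 2 + t)) = _
        rw [show i + 2 + t = i + t + 2 from by omega]
      rw [← hshift]
      rw [hEe] at hold
      exact hold

theorem admissible_sequence_sum
    (n : ℕ) (hn : 3 ≤ n)
    (e : ℕ → ℤ × ℤ) (m : ℕ → ℤ)
    (hper : ∀ i, e (i + n) = e i)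
    -- consecutive determinants equal 1
    (hdet : ∀ i, (e i).1 * (e (i + 1)).2 - (e i).2 * (e (i + 1)).1 = 1)
    -- the vectors are arranged in anticlockwise order, winding once around the origin
    (hacw : ∃ r θ : ℕ → ℝ, (∀ i, 0 < r i) ∧ (∀ i, θ i < θ (i + 1)) ∧
      θ n = θ 0 + 2 * Real.pi ∧
      ∀ i, ((e i).1 : ℝ) = r i * Real.cos (θ i) ∧
           ((e i).2 : ℝ) = r i * Real.sin (θ i))
    (hm : ∀ i, e i + e (i + 2) = m (i + 1) • e (i + 1)) :
    ∑ i ∈ Finset.range n, m (i + 1) = 3 * (n : ℤ) - 12 := by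
  obtain ⟨r, θ, hr, hθm, hθn, hre⟩ := hacw
  have hn0 : 0 < n := by omega
  have hmod : ∀ i, e i = e (i % n) := adm12_per_mod e n hn0 hper
  set R : ℕ → ℝ := fun i => r (i % n) with hR
  set Θ : ℕ → ℝ := fun i => θ (i % n) + ((i / n : ℕ) : ℝ) * (2 * Real.pi) with hΘ
  have A : Adm12 n e R Θ := by
    constructor
    · exact hper
    · intro i
      exact hdet i
    · intro i
      exact hr _
    · intro i
      show θ (i % n) + ((i / n : ℕ) : ℝ) * (2 * Real.pi) <
          θ ((i + 1) % n) + (((i + 1) / n : ℕ) : ℝ) * (2 * Real.pi)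
      rcases adm12_mod_succ n i hn0 with ⟨hm1, hm2, hm3⟩ | ⟨hm1, hm2, hm3⟩
      · rw [hm1, hm2]
        have := hθm (i % n)
        linarith
      · rw [hm1, hm2]
        have h1 := hθm (i % n)
        rw [hm3] at h1
        push_cast
        linarith
    · intro i
      show θ ((i + n) % n) + (((i + n) / n : ℕ) : ℝ) * (2 * Real.pi) =
          θ (i % n) + ((i / n : ℕ) : ℝ) * (2 * Real.pi) + 2 * Real.pi
      rw [Nat.add_mod_right, Nat.add_div_right _ hn0]
      push_cast
      ring
    · intro i
      constructor
      · show ((e i).1 : ℝ) =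
            R i * Real.cos (θ (i % n) + ((i / n : ℕ) : ℝ) * (2 * Real.pi))
        rw [Real.cos_add_nat_mul_two_pi, hmod i]
        exact (hre (i % n)).1
      · show ((e i).2 : ℝ) =
            R i * Real.sin (θ (i % n) + ((i / n : ℕ) : ℝ) * (2 * Real.pi))
        rw [Real.sin_add_nat_mul_two_pi, hmod i]
        exact (hre (i % n)).2
  have haux := adm12_aux n hn e R Θ A
  have hsum : ∀ i, m (i + 1) = adm12Dt (e i) (e (i + 2)) := by
    intro i
    have hx := congrArg Prod.fst (hm i)
    have hy := congrArg Prod.snd (hm i)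
    simp only [Prod.fst_add, Prod.snd_add, Prod.smul_fst, Prod.smul_snd, smul_eq_mul] at hx hy
    have hd := hdet i
    unfold adm12Dt
    linear_combination (- (e i).1) * hy + (e i).2 * hx - m (i + 1) * hd
  rw [Finset.sum_congr rfl (fun i _ => hsum i)]
  exact haux
end
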